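/- arXiv:1109.4451 — 3 statements merged into one kernel-verified Lean document; each statement's English description precedes it below -/
import Mathlib

section
/- If θ : Fin n → ℝ, A a symmetric 0/1 adjacency matrix with zero diagonal, and the matrix M_{ij} = A_{ij}·cos(θ_j − θ_i) − δ_{ij}·∑_k A_{ik}·cos(θ_k − θ_i) is negative semidefinite, then for every subset S of nodes, ∑_{i∈S, j∉S} A_{ij}·cos(θ_j − θ_i) ≥ 0. -/
open Matrix

theorem stmt_2 (n : ℕ) (θ : Fin n → ℝ) (A : Fin n → Fin n → ℝ)
    (hA01 : ∀ i j, A i j = 0 ∨ A i j = 1)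
    (hAsymm : ∀ i j, A i j = A j i)
    (hAdiag : ∀ i, A i i = 0)
    (M : Matrix (Fin n) (Fin n) ℝ)
    (hM : ∀ i j, M i j = A i j * Real.cos (θ j - θ i)
        - (if i = j then (1:ℝ) else 0) * ∑ k, A i k * Real.cos (θ k - θ i))
    (hnsd : ∀ z : Fin n → ℝ, z ⬝ᵥ M.mulVec z ≤ 0)
    (S : Finset (Fin n)) :
    0 ≤ ∑ i ∈ S, ∑ j ∈ Sᶜ, A i j * Real.cos (θ j - θ i) := by
  have h := hnsd (fun i => if i ∈ S then 1 else 0)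
  have hq : (fun i => if i ∈ S then (1:ℝ) else 0) ⬝ᵥ
      M.mulVec (fun i => if i ∈ S then 1 else 0)
      = ∑ i ∈ S, ∑ j ∈ S, M i j := by
    simp only [dotProduct, mulVec, ite_mul, one_mul, zero_mul, mul_ite, mul_one, mul_zero]
    rw [Finset.sum_ite_mem, Finset.univ_inter]
    congr 1
    ext i
    rw [Finset.sum_ite_mem, Finset.univ_inter]
  rw [hq] at h
  have key : ∑ i ∈ S, ∑ j ∈ S, M i j
      = -(∑ i ∈ S, ∑ j ∈ Sᶜ, A i j * Real.cos (θ j - θ i)) := by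
    rw [← Finset.sum_neg_distrib]
    apply Finset.sum_congr rfl
    intro i hi
    have : ∑ j ∈ S, M i j
        = (∑ j ∈ S, A i j * Real.cos (θ j - θ i))
          - ∑ k, A i k * Real.cos (θ k - θ i) := by
      simp only [hM, ite_mul, one_mul, zero_mul]
      rw [Finset.sum_sub_distrib]
      congr 1
      rw [Finset.sum_ite_eq (S) i, if_pos hi]
    rw [this]
    have hsplit : (∑ k, A i k * Real.cos (θ k - θ i))
        = (∑ j ∈ S, A i j * Real.cos (θ j - θ i))
          + ∑ j ∈ Sᶜ, A i j * Real.cos (θ j - θ i) := by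
      rw [← Finset.sum_add_sum_compl S]
    rw [hsplit]; ring
  rw [key] at h
  linarith
end

section
/- Let θ : Fin n → ℝ satisfy ∑_{i≠m} sin(θ_i − θ_m) = 0 for all m, and suppose p = ∑_j exp(i·θ_j) ≠ 0. Then there exists an angle φ such that for every m, θ_m ≡ φ (mod 2π) or θ_m ≡ φ + π (mod 2π). -/
open Real Complex

theorem stmt_5 (n : ℕ) (θ : Fin n → ℝ)
    (hfix : ∀ m : Fin n, ∑ i ∈ ({m} : Finset (Fin n))ᶜ, Real.sin (θ i - θ m) = 0)
    (hp : (∑ j, Complex.exp (θ j * Complex.I)) ≠ 0) :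
    ∃ φ : ℝ, ∀ m : Fin n,
      (∃ k : ℤ, θ m = φ + 2 * π * k) ∨ (∃ k : ℤ, θ m = φ + π + 2 * π * k) := by
  set p : ℂ := ∑ j, Complex.exp (θ j * Complex.I) with hpdef
  refine ⟨p.arg, fun m => ?_⟩
  have hfull : ∀ m : Fin n, ∑ i, Real.sin (θ i - θ m) = 0 := by
    intro m
    have := Finset.sum_add_sum_compl ({m} : Finset (Fin n)) (fun i => Real.sin (θ i - θ m))
    rw [hfix m, Finset.sum_singleton] at this
    simp at this
    exact this.symm
  have him : (p * Complex.exp (-(θ m) * Complex.I)).im = ∑ i, Real.sin (θ i - θ m) := by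
    rw [hpdef, Finset.sum_mul, Complex.im_sum]
    refine Finset.sum_congr rfl fun i _ => ?_
    rw [← Complex.exp_add]
    have : (θ i : ℂ) * Complex.I + -(θ m : ℂ) * Complex.I = ((θ i - θ m : ℝ) : ℂ) * Complex.I := by
      push_cast; ring
    rw [this, Complex.exp_ofReal_mul_I_im]
  have him0 : (p * Complex.exp (-(θ m) * Complex.I)).im = 0 := by
    rw [him, hfull]
  have habs : p * Complex.exp (-(θ m) * Complex.I)
      = (‖p‖ : ℂ) * Complex.exp ((p.arg - θ m : ℝ) * Complex.I) := by
    conv_lhs => rw [← Complex.norm_mul_exp_arg_mul_I p]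
    rw [mul_assoc, ← Complex.exp_add]
    congr 1
    push_cast; ring
  have hsin : Real.sin (p.arg - θ m) = 0 := by
    rw [habs] at him0
    have : ‖p‖ * Real.sin (p.arg - θ m) = 0 := by
      simp only [Complex.mul_im, Complex.ofReal_re, Complex.ofReal_im,
        Complex.exp_ofReal_mul_I_im, Complex.exp_ofReal_mul_I_re, zero_mul, add_zero] at him0
      exact him0
    rcases mul_eq_zero.mp this with h | h
    · exact absurd (norm_eq_zero.mp h) hp
    · exact h
  rcases Real.sin_eq_zero_iff.mp hsin with ⟨k, hk⟩
  rcases Int.even_or_odd k with ⟨l, hl⟩ | ⟨l, hl⟩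
  · left
    refine ⟨-l, ?_⟩
    have : θ m = p.arg - k * π := by linarith
    rw [this, hl]; push_cast; ring
  · right
    refine ⟨-l - 1, ?_⟩
    have : θ m = p.arg - k * π := by linarith
    rw [this, hl]; push_cast; ring
end

section
/- For the complete network homogeneous Kuramoto model, any fixed point θ satisfying the stability necessary condition ∑_{i∈S, j∉S} cos(θ_j − θ_i) ≥ 0 for all nonempty proper subsets S must have all phase differences equal to zero modulo 2π. Formally: if n ≥ 2, θ : Fin n → ℝ satisfies ∑_{i≠m} sin(θ_i − θ_m) = 0 for all m and ∑_{i∈S, j∉S} cos(θ_j − θ_i) ≥ 0 for every nonempty proper S ⊆ Fin n, then θ_i ≡ θ_j (mod 2π) for all i, j. -/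
open Real

theorem stmt_8 (n : ℕ) (hn : 2 ≤ n) (θ : Fin n → ℝ)
    (hfix : ∀ m : Fin n, ∑ i ∈ ({m} : Finset (Fin n))ᶜ, Real.sin (θ i - θ m) = 0)
    (hstab : ∀ S : Finset (Fin n), S.Nonempty → S ≠ Finset.univ →
      0 ≤ ∑ i ∈ S, ∑ j ∈ Sᶜ, Real.cos (θ j - θ i)) :
    ∀ i j : Fin n, ∃ k : ℤ, θ i - θ j = 2 * π * k := by
  set A := ∑ i, Real.cos (θ i) with hA
  set B := ∑ i, Real.sin (θ i) with hB
  -- fixed point condition in terms of A, B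
  have hfix' : ∀ m, B * Real.cos (θ m) - A * Real.sin (θ m) = 0 := by
    intro m
    have h1 : ∑ i, Real.sin (θ i - θ m) = 0 := by
      rw [← Finset.sum_compl_add_sum ({m} : Finset (Fin n))]
      simp [hfix m]
    calc B * Real.cos (θ m) - A * Real.sin (θ m)
        = ∑ i, (Real.sin (θ i) * Real.cos (θ m) - Real.cos (θ i) * Real.sin (θ m)) := by
          rw [Finset.sum_sub_distrib, ← Finset.sum_mul, ← Finset.sum_mul]
      _ = ∑ i, Real.sin (θ i - θ m) := by simp [Real.sin_sub]
      _ = 0 := h1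
  -- the sum of cos (θ j - θ m) over all j
  have hsum : ∀ m, ∑ j, Real.cos (θ j - θ m)
      = A * Real.cos (θ m) + B * Real.sin (θ m) := by
    intro m
    calc ∑ j, Real.cos (θ j - θ m)
        = ∑ j, (Real.cos (θ j) * Real.cos (θ m) + Real.sin (θ j) * Real.sin (θ m)) := by
          simp [Real.cos_sub]
      _ = A * Real.cos (θ m) + B * Real.sin (θ m) := by
          rw [Finset.sum_add_distrib, ← Finset.sum_mul, ← Finset.sum_mul]
  -- stability for singletons gives A cos θ m + B sin θ m ≥ 1
  have hsing : ∀ m : Fin n, 1 ≤ A * Real.cos (θ m) + B * Real.sin (θ m) := by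
    intro m
    have hne : ({m} : Finset (Fin n)) ≠ Finset.univ := by
      intro h
      have h2 : ({m} : Finset (Fin n)).card = (Finset.univ : Finset (Fin n)).card :=
        congrArg Finset.card h
      simp [Finset.card_univ] at h2
      omega
    have h0 := hstab {m} (Finset.singleton_nonempty m) hne
    have hcut : ∑ i ∈ ({m} : Finset (Fin n)), ∑ j ∈ ({m} : Finset (Fin n))ᶜ, Real.cos (θ j - θ i)
        = A * Real.cos (θ m) + B * Real.sin (θ m) - 1 := by
      rw [Finset.sum_singleton]
      have h3 : ∑ j ∈ ({m} : Finset (Fin n))ᶜ, Real.cos (θ j - θ m)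
          + ∑ j ∈ ({m} : Finset (Fin n)), Real.cos (θ j - θ m)
          = ∑ j, Real.cos (θ j - θ m) := Finset.sum_compl_add_sum _ _
      rw [Finset.sum_singleton, hsum m] at h3
      simp at h3
      linarith
    linarith [hcut ▸ h0]
  -- each c m squares to A² + B²
  have hsq : ∀ m, (A * Real.cos (θ m) + B * Real.sin (θ m)) ^ 2 = A ^ 2 + B ^ 2 := by
    intro m
    have h1 := hfix' m
    have h2 := Real.sin_sq_add_cos_sq (θ m)
    nlinarith [h1, h2, sq_nonneg (B * Real.cos (θ m) - A * Real.sin (θ m))]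
  -- scalar relations
  have hcos : ∀ m, (A ^ 2 + B ^ 2) * Real.cos (θ m)
      = A * (A * Real.cos (θ m) + B * Real.sin (θ m)) := by
    intro m
    have h1 := hfix' m
    linear_combination B * h1
  have hsin : ∀ m, (A ^ 2 + B ^ 2) * Real.sin (θ m)
      = B * (A * Real.cos (θ m) + B * Real.sin (θ m)) := by
    intro m
    have h1 := hfix' m
    linear_combination (-A) * h1
  intro i j
  have hci := hsing i
  have hcj := hsing j
  have hpos : (0:ℝ) < A ^ 2 + B ^ 2 := by nlinarith [hsq i, hsing i]
  -- c i = c j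
  have hceq : A * Real.cos (θ i) + B * Real.sin (θ i)
      = A * Real.cos (θ j) + B * Real.sin (θ j) := by
    have h : (A * Real.cos (θ i) + B * Real.sin (θ i) - (A * Real.cos (θ j) + B * Real.sin (θ j)))
        * (A * Real.cos (θ i) + B * Real.sin (θ i) + (A * Real.cos (θ j) + B * Real.sin (θ j))) = 0 := by
      linear_combination hsq i - hsq j
    rcases mul_eq_zero.mp h with h' | h'
    · linarith
    · linarith
  -- product of c i and c j equals A² + B²
  have hprod : (A * Real.cos (θ i) + B * Real.sin (θ i)) * (A * Real.cos (θ j) + B * Real.sin (θ j))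
      = A ^ 2 + B ^ 2 := by
    rw [← hceq, ← sq]
    exact hsq i
  have hdot : Real.cos (θ i) * Real.cos (θ j) + Real.sin (θ i) * Real.sin (θ j) = 1 := by
    have key : (A ^ 2 + B ^ 2) ^ 2 * (Real.cos (θ i) * Real.cos (θ j) + Real.sin (θ i) * Real.sin (θ j))
        = (A ^ 2 + B ^ 2) ^ 2 := by
      calc (A ^ 2 + B ^ 2) ^ 2 * (Real.cos (θ i) * Real.cos (θ j) + Real.sin (θ i) * Real.sin (θ j))
          = ((A ^ 2 + B ^ 2) * Real.cos (θ i)) * ((A ^ 2 + B ^ 2) * Real.cos (θ j))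
            + ((A ^ 2 + B ^ 2) * Real.sin (θ i)) * ((A ^ 2 + B ^ 2) * Real.sin (θ j)) := by ring
        _ = (A * (A * Real.cos (θ i) + B * Real.sin (θ i))) * (A * (A * Real.cos (θ j) + B * Real.sin (θ j)))
            + (B * (A * Real.cos (θ i) + B * Real.sin (θ i))) * (B * (A * Real.cos (θ j) + B * Real.sin (θ j))) := by
            rw [hcos i, hcos j, hsin i, hsin j]
        _ = (A ^ 2 + B ^ 2) * ((A * Real.cos (θ i) + B * Real.sin (θ i)) * (A * Real.cos (θ j) + B * Real.sin (θ j))) := by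
            ring
        _ = (A ^ 2 + B ^ 2) ^ 2 := by rw [hprod]; ring
    have hne2 : (A ^ 2 + B ^ 2) ^ 2 ≠ 0 := by positivity
    exact mul_left_cancel₀ hne2 (by rw [key, mul_one])
  have hcos1 : Real.cos (θ i - θ j) = 1 := by
    rw [Real.cos_sub]; linarith
  obtain ⟨k, hk⟩ := Real.cos_eq_one_iff _ |>.mp hcos1
  exact ⟨k, by linarith⟩
end
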